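/- For every countable ordinal ξ, the Schreier family 𝒮_ξ satisfies ι(𝒮_ξ) = ω^ξ. -/

import Mathlib

open Ordinal

/-- A family of finite subsets of `ℕ` is hereditary if it contains all subsets of
its members. -/
def IsHereditary (F : Set (Finset ℕ)) : Prop := ∀ E ∈ F, ∀ G ⊆ E, G ∈ F

/-- A family of finite subsets of `ℕ` is spreading if it is closed under replacing
the elements of a member by larger ones, preserving the order. -/
def IsSpreading (F : Set (Finset ℕ)) : Prop :=
  ∀ E ∈ F, ∀ f : ℕ → ℕ, StrictMonoOn f (E : Set ℕ) → (∀ n ∈ E, n ≤ f n) →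
    E.image f ∈ F

/-- A family of finite subsets of `ℕ` is regular if it is compact (as a subset of
the Cantor set `2^ℕ`, identifying sets with their indicator functions), spreading
and hereditary. -/
def IsRegularFamily (F : Set (Finset ℕ)) : Prop :=
  IsCompact ((fun (E : Finset ℕ) (n : ℕ) => decide (n ∈ E)) '' F) ∧
    IsSpreading F ∧ IsHereditary F

/-- The derivative of a family: remove the maximal elements (those admitting no
extension by a larger element within the family). -/
def famDeriv (F : Set (Finset ℕ)) : Set (Finset ℕ) :=
  {E ∈ F | ∃ n : ℕ, (∀ m ∈ E, m < n) ∧ insert n E ∈ F}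

/-- Transfinite iterates of the family derivative. -/
noncomputable def famIter (F : Set (Finset ℕ)) (ξ : Ordinal) : Set (Finset ℕ) :=
  Ordinal.limitRecOn ξ F (fun _ ih => famDeriv ih)
    (fun o _ ih => ⋂ (ζ : Set.Iio o), ih ζ.1 ζ.2)

/-- The Cantor–Bendixson-type index of a family: the least ordinal `ξ` such that
`d^ξ(F) ⊆ {∅}`. -/
noncomputable def famIota (F : Set (Finset ℕ)) : Ordinal :=
  sInf {ξ : Ordinal | famIter F ξ ⊆ {(∅ : Finset ℕ)}}

/-- The "sum" `(𝒻,𝒢)` of two families: all unions `E ∪ F` with `E ∈ 𝒻`, `F ∈ 𝒢`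
and `max E < min F`, together with `𝒻` and `𝒢`. -/
def famSum (F G : Set (Finset ℕ)) : Set (Finset ℕ) :=
  {H : Finset ℕ | ∃ E ∈ F, ∃ E' ∈ G, (∀ m ∈ E, ∀ n ∈ E', m < n) ∧ H = E ∪ E'} ∪ F ∪ G

/-- The "product" `𝒻[𝒢]` of two families: unions of `𝒻`-admissible sequences of
members of `𝒢`, i.e. `E_1 < … < E_s` with each `E_i ∈ 𝒢` and `(min E_i)_i ∈ 𝒻`. -/
def famProd (F G : Set (Finset ℕ)) : Set (Finset ℕ) :=
  {H : Finset ℕ | ∃ l : List {E : Finset ℕ // E.Nonempty},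
    l ≠ [] ∧ (∀ E ∈ l, (E : Finset ℕ) ∈ G) ∧
    l.Chain' (fun E E' => ∀ m ∈ (E : Finset ℕ), ∀ n ∈ (E' : Finset ℕ), m < n) ∧
    (l.map fun E => E.1.min' E.2).toFinset ∈ F ∧
    H = l.foldr (fun E acc => E.1 ∪ acc) ∅}

/-- The family `𝒮 = {E : |E| ≤ min E}` (vacuously including `∅`). -/
def schreierUnit : Set (Finset ℕ) := {E : Finset ℕ | ∀ n ∈ E, E.card ≤ n}

/-- `IsSchreier ξ F` holds when `F` is a Schreier family of order `ξ`, i.e. arises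
from the recursion `𝒮_0 = 𝒜_1`, `𝒮_(ξ+1) = 𝒮[𝒮_ξ]`, and at limits a diagonal union
along some `ξ_n ↑ ξ` chosen so that the families increase. -/
inductive IsSchreier : Ordinal → Set (Finset ℕ) → Prop
  | zero : IsSchreier 0 {E : Finset ℕ | E.card ≤ 1}
  | succ (ξ : Ordinal) (F : Set (Finset ℕ)) :
      IsSchreier ξ F → IsSchreier (ξ + 1) (famProd schreierUnit F)
  | limit (ξ : Ordinal) (hξ : Order.IsSuccLimit ξ) (o : ℕ → Ordinal) (Fs : ℕ → Set (Finset ℕ)) :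
      StrictMono o → (∀ n, o n < ξ) → (∀ ζ < ξ, ∃ n, ζ ≤ o n) →
      (∀ n, IsSchreier (o n + 1) (Fs n)) → (∀ n, Fs n ⊆ Fs (n + 1)) →
      IsSchreier ξ {E : Finset ℕ | ∃ n : ℕ, (∀ m ∈ E, n ≤ m) ∧ E ∈ Fs n}

theorem famIter_zero (F : Set (Finset ℕ)) : famIter F 0 = F :=
  Ordinal.limitRecOn_zero _ _ _

theorem famIter_succ (F : Set (Finset ℕ)) (α : Ordinal) :
    famIter F (α + 1) = famDeriv (famIter F α) := by
  rw [famIter, Ordinal.add_one_eq_succ, Ordinal.limitRecOn_succ]; rfl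

theorem famIter_limit (F : Set (Finset ℕ)) {α : Ordinal} (h : Order.IsSuccLimit α) :
    famIter F α = ⋂ (ζ : Set.Iio α), famIter F ζ.1 := by
  rw [famIter, Ordinal.limitRecOn_limit _ _ _ _ h]; rfl

theorem famDeriv_subset (F : Set (Finset ℕ)) : famDeriv F ⊆ F := fun _ h => h.1

theorem famDeriv_mono {F G : Set (Finset ℕ)} (h : F ⊆ G) : famDeriv F ⊆ famDeriv G := by
  rintro E ⟨hE, n, hn, hin⟩
  exact ⟨h hE, n, hn, h hin⟩

theorem famIter_anti (F : Set (Finset ℕ)) : ∀ {α β : Ordinal}, α ≤ β →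
    famIter F β ⊆ famIter F α := by
  intro α β
  induction β using Ordinal.induction with
  | h β IH =>
    intro hαβ
    rcases eq_or_lt_of_le hαβ with rfl | hlt
    · exact subset_rfl
    rcases Ordinal.zero_or_succ_or_isSuccLimit β with rfl | ⟨γ, rfl⟩ | hβ
    · exact absurd hlt (not_lt.2 zero_le)
    · rw [← Ordinal.add_one_eq_succ, famIter_succ]
      refine (famDeriv_subset _).trans ?_
      exact IH γ (Order.lt_succ γ) (Order.le_of_lt_succ hlt)
    · rw [famIter_limit F hβ]
      intro E hE
      have := Set.mem_iInter.1 hE ⟨α, hlt⟩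
      exact this

theorem famIter_subset (F : Set (Finset ℕ)) (α : Ordinal) : famIter F α ⊆ F := by
  have := famIter_anti F (zero_le : 0 ≤ α)
  rwa [famIter_zero] at this

theorem famIter_mono {F G : Set (Finset ℕ)} (h : F ⊆ G) (α : Ordinal) :
    famIter F α ⊆ famIter G α := by
  induction α using Ordinal.limitRecOn with
  | zero => rw [famIter_zero, famIter_zero]; exact h
  | add_one γ IH => rw [famIter_succ, famIter_succ]; exact famDeriv_mono IH
  | limit γ hγ IH =>
    rw [famIter_limit F hγ, famIter_limit G hγ]
    exact fun E hE => Set.mem_iInter.2 fun ζ => IH ζ.1 ζ.2 (Set.mem_iInter.1 hE ζ)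

theorem mem_famIter_succ {F : Set (Finset ℕ)} {α : Ordinal} {E : Finset ℕ} :
    E ∈ famIter F (α + 1) ↔ E ∈ famIter F α ∧
      ∃ n : ℕ, (∀ m ∈ E, m < n) ∧ insert n E ∈ famIter F α := by
  rw [famIter_succ]; rfl

theorem mem_famIter_limit {F : Set (Finset ℕ)} {α : Ordinal} (h : Order.IsSuccLimit α) {E : Finset ℕ} :
    E ∈ famIter F α ↔ ∀ β < α, E ∈ famIter F β := by
  rw [famIter_limit F h]
  constructor
  · intro hE β hβ; exact Set.mem_iInter.1 hE ⟨β, hβ⟩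
  · intro hE; exact Set.mem_iInter.2 fun ζ => hE ζ.1 ζ.2


abbrev Blk := {E : Finset ℕ // E.Nonempty}

def blkR (E E' : Blk) : Prop := ∀ m ∈ (E : Finset ℕ), ∀ n ∈ (E' : Finset ℕ), m < n

theorem blkR_trans : ∀ {a b c : Blk}, blkR a b → blkR b c → blkR a c := by
  intro a b c h1 h2 m hm n hn
  obtain ⟨x, hx⟩ := b.2
  exact (h1 m hm x hx).trans (h2 x hx n hn)

def bU (l : List Blk) : Finset ℕ := l.foldr (fun E acc => E.1 ∪ acc) ∅

def mins (l : List Blk) : List ℕ := l.map fun E => E.1.min' E.2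

theorem mem_bU {l : List Blk} {x : ℕ} : x ∈ bU l ↔ ∃ E ∈ l, x ∈ E.1 := by
  induction l with
  | nil => simp [bU]
  | cons a l ih =>
    show x ∈ a.1 ∪ bU l ↔ _
    rw [Finset.mem_union, ih]
    constructor
    · rintro (h | ⟨E, hE, hx⟩)
      exacts [⟨a, List.mem_cons_self, h⟩, ⟨E, List.mem_cons_of_mem a hE, hx⟩]
    · rintro ⟨E, hE, hx⟩
      rcases List.mem_cons.1 hE with rfl | hE
      exacts [Or.inl hx, Or.inr ⟨E, hE, hx⟩]

theorem bU_append (l₁ l₂ : List Blk) : bU (l₁ ++ l₂) = bU l₁ ∪ bU l₂ := by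
  induction l₁ with
  | nil => simp [bU]
  | cons a l ih =>
    show a.1 ∪ bU (l ++ l₂) = (a.1 ∪ bU l) ∪ bU l₂
    rw [ih, Finset.union_assoc]

theorem bU_singleton (b : Blk) : bU [b] = b.1 := by simp [bU]

theorem bU_nonempty {l : List Blk} (h : l ≠ []) : (bU l).Nonempty := by
  rcases List.exists_mem_of_ne_nil l h with ⟨E, hE⟩
  rcases E.2 with ⟨x, hx⟩
  exact ⟨x, mem_bU.2 ⟨E, hE, hx⟩⟩

theorem mem_famProd_iff {F : Set (Finset ℕ)} {H : Finset ℕ} :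
    H ∈ famProd schreierUnit F ↔ ∃ l : List Blk,
      l ≠ [] ∧ (∀ E ∈ l, E.1 ∈ F) ∧ l.Chain' blkR ∧
      (mins l).toFinset ∈ schreierUnit ∧ H = bU l := by
  rw [famProd, Set.mem_setOf_eq]
  refine exists_congr fun l => ?_
  rw [show (do let a ← l; pure ((a : Finset ℕ))) = l.map Subtype.val by
    simp only [List.pure_def, List.bind_eq_flatMap, List.flatMap_subtype,
      List.flatMap_singleton', List.map_subtype, List.map_id_fun', id_eq],
    List.Chain', List.isChain_map]
  exact Iff.rfl

/-- pairwise from chain -/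
instance : IsTrans Blk blkR := ⟨fun _ _ _ => blkR_trans⟩

theorem chain_pairwise {l : List Blk} (h : l.Chain' blkR) : l.Pairwise blkR :=
  List.isChain_iff_pairwise.1 h

theorem mins_chain {l : List Blk} (h : l.Chain' blkR) : (mins l).Chain' (· < ·) := by
  rw [mins, List.Chain', List.isChain_map]
  refine h.imp ?_
  rintro a b hab
  exact hab _ (a.1.min'_mem a.2) _ (b.1.min'_mem b.2)

theorem mins_nodup {l : List Blk} (h : l.Chain' blkR) : (mins l).Nodup := by
  have := List.isChain_iff_pairwise.1 (mins_chain h)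
  exact this.imp ne_of_lt

theorem mins_mem_bU {l : List Blk} {k : ℕ} (hk : k ∈ mins l) : k ∈ bU l := by
  rw [mins, List.mem_map] at hk
  rcases hk with ⟨E, hE, rfl⟩
  exact mem_bU.2 ⟨E, hE, E.1.min'_mem E.2⟩

theorem schreierUnit_hered {A B : Finset ℕ} (h : A ⊆ B) (hB : B ∈ schreierUnit) :
    A ∈ schreierUnit := fun n hn => le_trans (Finset.card_le_card h) (hB n (h hn))

/-- the mins condition gives length ≤ each min, given nodup -/
theorem length_le_of_minscond {l : List Blk} (hc : l.Chain' blkR)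
    (h : (mins l).toFinset ∈ schreierUnit) {k : ℕ} (hk : k ∈ mins l) : l.length ≤ k := by
  have hcard : (mins l).toFinset.card = l.length := by
    rw [List.toFinset_card_of_nodup (mins_nodup hc), mins, List.length_map]
  have := h k (List.mem_toFinset.2 hk)
  rwa [hcard] at this

/-- elements of earlier blocks are below all elements of the last block -/
theorem lt_of_last {l₀ : List Blk} {b : Blk} (hc : (l₀ ++ [b]).Chain' blkR)
    {m : ℕ} (hm : m ∈ bU l₀) {k : ℕ} (hk : k ∈ b.1) : m < k := by
  rcases mem_bU.1 hm with ⟨E, hE, hmE⟩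
  have hp := chain_pairwise hc
  rw [List.pairwise_append] at hp
  exact hp.2.2 E hE b (List.mem_singleton_self b) m hmE k hk

theorem min'_insert_of_lt {s : Finset ℕ} (hs : s.Nonempty) {n : ℕ} (h : ∀ m ∈ s, m < n) :
    (insert n s).min' (Finset.insert_nonempty n s) = s.min' hs := by
  rw [Finset.min'_insert]
  exact min_eq_right ((s.min'_le _ (s.min'_mem hs)).trans (le_of_lt (h _ (s.min'_mem hs))))

theorem min'_erase_max {s : Finset ℕ} {n : ℕ} (h : ∀ m ∈ s, m ≤ n)
    (hne : (s.erase n).Nonempty) :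
    (s.erase n).min' hne = s.min' (hne.mono (s.erase_subset n)) := by
  have hs : s.Nonempty := hne.mono (s.erase_subset n)
  refine le_antisymm ?_ ?_
  · refine Finset.min'_le _ _ ?_
    refine Finset.mem_erase.2 ⟨?_, s.min'_mem hs⟩
    rcases hne with ⟨x, hx⟩
    rcases Finset.mem_erase.1 hx with ⟨hxn, hxs⟩
    intro hmin
    exact hxn (le_antisymm (h x hxs) (hmin ▸ s.min'_le x hxs))
  · exact s.min'_le _ ((s.erase_subset n) ((s.erase n).min'_mem hne))


theorem iter_le_mu {F : Set (Finset ℕ)} (μ : Finset ℕ → Ordinal)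
    (hdec : ∀ E : Finset ℕ, E.Nonempty → ∀ n, (∀ m ∈ E, m < n) → insert n E ∈ F →
      μ (insert n E) < μ E) :
    ∀ α : Ordinal, ∀ E ∈ famIter F α, E.Nonempty → α ≤ μ E := by
  intro α
  induction α using Ordinal.induction with
  | h α IH =>
    intro E hE hne
    rcases Ordinal.zero_or_succ_or_isSuccLimit α with rfl | ⟨β, rfl⟩ | hα
    · exact zero_le
    · rw [← Ordinal.add_one_eq_succ] at hE ⊢
      rcases mem_famIter_succ.1 hE with ⟨_, n, hn, hins⟩
      have h2 : insert n E ∈ F := famIter_subset F β hins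
      have h3 := hdec E hne n hn h2
      have h4 : β ≤ μ (insert n E) :=
        IH β (Order.lt_succ β) _ hins
          (Finset.insert_nonempty n E)
      have : β + 1 ≤ μ (insert n E) + 1 := by
        rw [Ordinal.add_one_eq_succ, Ordinal.add_one_eq_succ]; exact Order.succ_le_succ h4
      refine this.trans ?_
      rw [Ordinal.add_one_eq_succ, Order.succ_le_iff]; exact h3
    · by_contra hcon
      push_neg at hcon
      have h1 : μ E + 1 < α := hα.succ_lt hcon
      have h2 : E ∈ famIter F (μ E + 1) := (mem_famIter_limit hα).1 hE _ h1
      have := IH (μ E + 1) h1 E h2 hne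
      rw [Ordinal.add_one_eq_succ, Order.succ_le_iff] at this
      exact lt_irrefl _ this

section LimitFam

variable (Fs : ℕ → Set (Finset ℕ))

def Flim : Set (Finset ℕ) := {E : Finset ℕ | ∃ n : ℕ, (∀ m ∈ E, n ≤ m) ∧ E ∈ Fs n}

variable {Fs}

theorem mem_Flim_iff (hmono : Monotone Fs) {E : Finset ℕ} (h : E.Nonempty) :
    E ∈ Flim Fs ↔ E ∈ Fs (E.min' h) := by
  constructor
  · rintro ⟨n, hn, hE⟩
    exact hmono (hn _ (E.min'_mem h)) hE
  · intro hE
    exact ⟨E.min' h, fun m hm => E.min'_le m hm, hE⟩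

theorem iter_Flim (hmono : Monotone Fs) (k : ℕ) : ∀ α : Ordinal, ∀ E : Finset ℕ, ∀ h : E.Nonempty,
    E.min' h = k → (E ∈ famIter (Flim Fs) α ↔ E ∈ famIter (Fs k) α) := by
  intro α
  induction α using Ordinal.induction with
  | h α IH =>
    intro E h hk
    rcases Ordinal.zero_or_succ_or_isSuccLimit α with rfl | ⟨β, rfl⟩ | hα
    · rw [famIter_zero, famIter_zero, mem_Flim_iff hmono h, hk]
    · rw [← Ordinal.add_one_eq_succ, mem_famIter_succ, mem_famIter_succ]
      have hβ : β < Order.succ β := Order.lt_succ β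
      constructor
      · rintro ⟨h1, n, hn, h2⟩
        refine ⟨(IH β hβ E h hk).1 h1, n, hn, ?_⟩
        refine (IH β hβ (insert n E) (Finset.insert_nonempty n E) ?_).1 h2
        rw [min'_insert_of_lt h hn, hk]
      · rintro ⟨h1, n, hn, h2⟩
        refine ⟨(IH β hβ E h hk).2 h1, n, hn, ?_⟩
        refine (IH β hβ (insert n E) (Finset.insert_nonempty n E) ?_).2 h2
        rw [min'_insert_of_lt h hn, hk]
    · rw [mem_famIter_limit hα, mem_famIter_limit hα]
      exact forall₂_congr fun β hβ => IH β hβ E h hk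

theorem iter_Flim_of_mem (hmono : Monotone Fs) {k : ℕ} {α : Ordinal} {E : Finset ℕ} (h : E.Nonempty)
    (hk : k ≤ E.min' h) (hE : E ∈ famIter (Fs k) α) : E ∈ famIter (Flim Fs) α :=
  (iter_Flim hmono (E.min' h) α E h rfl).2 (famIter_mono (hmono hk) α hE)

end LimitFam


theorem chain_snoc {l : List Blk} {b : Blk} :
    (l ++ [b]).Chain' blkR ↔ l.Chain' blkR ∧ ∀ E ∈ l, blkR E b := by
  rw [List.Chain', List.isChain_iff_pairwise, List.Chain', List.isChain_iff_pairwise, List.pairwise_append]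
  simp only [List.pairwise_singleton, true_and, List.mem_singleton]
  constructor
  · rintro ⟨h1, h2⟩; exact ⟨h1, fun E hE => h2 E hE b rfl⟩
  · rintro ⟨h1, h2⟩; exact ⟨h1, fun E hE b' hb' => hb' ▸ h2 E hE⟩

theorem mins_snoc (l : List Blk) (b : Blk) :
    mins (l ++ [b]) = mins l ++ [b.1.min' b.2] := by simp [mins]

theorem bU_snoc (l : List Blk) (b : Blk) : bU (l ++ [b]) = bU l ∪ b.1 := by
  rw [bU_append, bU_singleton]

theorem bU_lt_of_blocks {l₀ : List Blk} {b : Blk} (hc : (l₀ ++ [b]).Chain' blkR)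
    {n : ℕ} (hn : ∀ m ∈ b.1, m < n) : ∀ m ∈ bU (l₀ ++ [b]), m < n := by
  intro m hm
  rw [bU_snoc, Finset.mem_union] at hm
  rcases hm with hm | hm
  · rcases mem_bU.1 hm with ⟨E, hE, hmE⟩
    obtain ⟨k, hk⟩ := b.2
    exact lt_trans ((chain_snoc.1 hc).2 E hE m hmE k hk) (hn k hk)
  · exact hn m hm

theorem min'_congr {A B : Finset ℕ} (hA : A.Nonempty) (hB : B.Nonempty) (h : A = B) :
    A.min' hA = B.min' hB := by subst h; rfl

theorem prodLow {F : Set (Finset ℕ)} {ξ : Ordinal}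
    (hLow : ∀ γ < ω ^ ξ, ∀ N : ℕ, ∃ n, N ≤ n ∧ ({n} : Finset ℕ) ∈ famIter F γ) :
    ∀ δ β : Ordinal, ∀ l₀ : List Blk, ∀ b : Blk,
      (∀ E ∈ l₀, E.1 ∈ F) → b.1 ∈ famIter F β → (l₀ ++ [b]).Chain' blkR →
      (mins (l₀ ++ [b])).toFinset ∈ schreierUnit →
      δ ≤ ω ^ ξ * ((bU (l₀ ++ [b])).min' (bU_nonempty (by simp)) - (l₀.length + 1) : ℕ) + β →
      bU (l₀ ++ [b]) ∈ famIter (famProd schreierUnit F) δ := by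
  intro δ
  induction δ using Ordinal.induction with
  | h δ IHδ =>
  intro β
  induction β using Ordinal.induction with
  | h β IHβ =>
  intro l₀ b hbl hb hc hm hle
  have hlne : l₀ ++ [b] ≠ [] := by simp
  have hne : (bU (l₀ ++ [b])).Nonempty := bU_nonempty hlne
  rcases Ordinal.zero_or_succ_or_isSuccLimit δ with rfl | ⟨γ, rfl⟩ | hδ
  · rw [famIter_zero]
    refine mem_famProd_iff.2 ⟨l₀ ++ [b], hlne, ?_, hc, hm, rfl⟩
    intro E hE
    rcases List.mem_append.1 hE with h | h
    · exact hbl E h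
    · rw [List.mem_singleton] at h; subst h; exact famIter_subset F β hb
  · rw [← Ordinal.add_one_eq_succ] at IHδ hle ⊢
    have hγδ : γ < γ + 1 := by rw [Ordinal.add_one_eq_succ]; exact Order.lt_succ γ
    rcases Ordinal.zero_or_succ_or_isSuccLimit β with rfl | ⟨β', rfl⟩ | hβ
    · -- β = 0 : open a new block
      rw [add_zero] at hle
      have hms : (bU (l₀ ++ [b])).min' hne - (l₀.length + 1) ≠ 0 := by
        intro h
        rw [h] at hle
        simp only [Nat.cast_zero, mul_zero, Ordinal.add_one_eq_succ] at hle
        exact absurd hle (by simp [Order.succ_le_iff, not_lt_zero])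
      have hγlt : γ < ω ^ ξ * ((bU (l₀ ++ [b])).min' hne - (l₀.length + 1) : ℕ) :=
        lt_of_lt_of_le hγδ hle
      have hnat : ((bU (l₀ ++ [b])).min' hne - (l₀.length + 1)) =
          ((bU (l₀ ++ [b])).min' hne - (l₀.length + 1) - 1) + 1 :=
        (Nat.succ_pred_eq_of_pos (Nat.pos_of_ne_zero hms)).symm
      have hγlt2 : γ < ω ^ ξ * ((bU (l₀ ++ [b])).min' hne - (l₀.length + 1) - 1 : ℕ) + ω ^ ξ := by
        rw [hnat, Nat.cast_add, Nat.cast_one, mul_add, mul_one] at hγlt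
        exact hγlt
      obtain ⟨γ'', hγ''lt, hγ''⟩ :=
        (Ordinal.lt_add_iff (Ordinal.opow_ne_zero ξ Ordinal.omega0_ne_zero)).1 hγlt2
      obtain ⟨n, hnN, hsing⟩ := hLow γ'' hγ''lt
        (max ((bU (l₀ ++ [b])).max' hne + 1) (l₀.length + 2))
      have hbig : ∀ m ∈ bU (l₀ ++ [b]), m < n := fun m hm =>
        lt_of_lt_of_le (Nat.lt_succ_of_le (Finset.le_max' _ m hm))
          (le_trans (le_max_left _ _) hnN)
      have hnlen : l₀.length + 2 ≤ n := le_trans (le_max_right _ _) hnN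
      set b2 : Blk := ⟨{n}, Finset.singleton_nonempty n⟩ with hb2
      have hc2 : ((l₀ ++ [b]) ++ [b2]).Chain' blkR := by
        refine chain_snoc.2 ⟨hc, fun E hE m hmE k hk => ?_⟩
        rw [hb2] at hk
        simp only [Finset.mem_singleton] at hk
        subst hk
        exact hbig m (mem_bU.2 ⟨E, hE, hmE⟩)
      have hsm : l₀.length + 2 ≤ (bU (l₀ ++ [b])).min' hne := by
        have := Nat.pos_of_ne_zero hms
        omega
      have hmins2 : (mins ((l₀ ++ [b]) ++ [b2])).toFinset =
          insert n (mins (l₀ ++ [b])).toFinset := by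
        rw [mins_snoc, List.toFinset_append]
        have hx : b2.1.min' b2.2 = n := Finset.min'_singleton n
        rw [hx]
        rw [show ([n] : List ℕ).toFinset = {n} by simp]
        rw [Finset.insert_eq, Finset.union_comm]
      have hm2 : (mins ((l₀ ++ [b]) ++ [b2])).toFinset ∈ schreierUnit := by
        intro k hk
        rw [hmins2] at hk ⊢
        have h1 : (mins (l₀ ++ [b])).toFinset.card ≤ l₀.length + 1 := by
          refine le_trans (List.toFinset_card_le _) ?_
          rw [mins, List.length_map, List.length_append, List.length_singleton]
        have hcard : (insert n (mins (l₀ ++ [b])).toFinset).card ≤ l₀.length + 2 := by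
          refine le_trans (Finset.card_insert_le _ _) ?_
          omega
        rcases Finset.mem_insert.1 hk with rfl | hk
        · exact le_trans hcard hnlen
        · exact le_trans hcard (le_trans hsm
            (Finset.min'_le _ _ (mins_mem_bU (List.mem_toFinset.1 hk))))
      have hbU2 : bU ((l₀ ++ [b]) ++ [b2]) = insert n (bU (l₀ ++ [b])) := by
        rw [bU_snoc ((l₀ ++ [b])) b2, hb2, Finset.insert_eq, Finset.union_comm]
      refine mem_famIter_succ.2 ⟨?_, n, hbig, ?_⟩
      · refine IHδ γ hγδ 0 l₀ b hbl hb hc hm ?_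
        rw [add_zero]
        exact le_of_lt hγlt
      · have hres := IHδ γ hγδ γ'' (l₀ ++ [b]) b2 (fun E hE => by
          rcases List.mem_append.1 hE with h | h
          · exact hbl E h
          · rw [List.mem_singleton] at h; subst h
            rw [famIter_zero] at hb; exact hb) hsing hc2 hm2 ?_
        · rwa [hbU2] at hres
        · have hmin2 : (bU ((l₀ ++ [b]) ++ [b2])).min' (bU_nonempty (by simp)) =
              (bU (l₀ ++ [b])).min' hne := by
            rw [min'_congr _ (Finset.insert_nonempty n _) hbU2]
            exact min'_insert_of_lt hne hbig
          rw [hmin2]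
          have hlen : (l₀ ++ [b]).length + 1 = l₀.length + 2 := by simp
          rw [hlen]
          refine le_trans hγ'' ?_
          have : (bU (l₀ ++ [b])).min' hne - (l₀.length + 1) - 1 =
              (bU (l₀ ++ [b])).min' hne - (l₀.length + 2) := by omega
          rw [this]
    · -- β = β' + 1 : extend the last block
      rw [← Ordinal.add_one_eq_succ] at hb hle IHβ
      rcases mem_famIter_succ.1 hb with ⟨hbβ', n, hn, hins⟩
      set b2 : Blk := ⟨insert n b.1, Finset.insert_nonempty n b.1⟩ with hb2
      have hbig : ∀ m ∈ bU (l₀ ++ [b]), m < n := bU_lt_of_blocks hc hn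
      have hbU2 : bU (l₀ ++ [b2]) = insert n (bU (l₀ ++ [b])) := by
        rw [bU_snoc, bU_snoc, hb2, Finset.union_insert]
      have hminb2 : b2.1.min' b2.2 = b.1.min' b.2 := min'_insert_of_lt b.2 hn
      have hc2 : (l₀ ++ [b2]).Chain' blkR := by
        refine chain_snoc.2 ⟨(chain_snoc.1 hc).1, fun E hE m hmE k hk => ?_⟩
        rw [hb2] at hk
        rcases Finset.mem_insert.1 hk with rfl | hk
        · exact hbig m (by rw [bU_snoc, Finset.mem_union]; exact Or.inl (mem_bU.2 ⟨E, hE, hmE⟩))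
        · exact (chain_snoc.1 hc).2 E hE m hmE k hk
      have hm2 : mins (l₀ ++ [b2]) = mins (l₀ ++ [b]) := by
        rw [mins_snoc, mins_snoc, hminb2]
      refine mem_famIter_succ.2 ⟨?_, n, hbig, ?_⟩
      · exact IHδ γ hγδ (β' + 1) l₀ b hbl hb hc hm (le_trans (le_of_lt hγδ) hle)
      · have hres := IHδ γ hγδ β' l₀ b2 hbl hins hc2 (by rwa [hm2]) ?_
        · rwa [hbU2] at hres
        · have hmin2 : (bU (l₀ ++ [b2])).min' (bU_nonempty (by simp)) =
              (bU (l₀ ++ [b])).min' hne := by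
            rw [min'_congr _ (Finset.insert_nonempty n _) hbU2]
            exact min'_insert_of_lt hne hbig
          rw [hmin2]
          have : γ + 1 ≤ (ω ^ ξ * ((bU (l₀ ++ [b])).min' hne - (l₀.length + 1) : ℕ) + β') + 1 := by
            rw [add_assoc]
            exact hle
          rw [Ordinal.add_one_eq_succ, Ordinal.add_one_eq_succ] at this
          exact Order.succ_le_succ_iff.1 this
    · -- β limit
      have hlim : Order.IsSuccLimit (ω ^ ξ * ((bU (l₀ ++ [b])).min' hne - (l₀.length + 1) : ℕ) + β) :=
        Ordinal.isSuccLimit_add _ hβ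
      have hlt : γ + 1 < ω ^ ξ * ((bU (l₀ ++ [b])).min' hne - (l₀.length + 1) : ℕ) + β := by
        rcases lt_or_eq_of_le hle with h | h
        · exact h
        · exfalso
          rw [← h] at hlim
          have := hlim.succ_lt (show γ < γ + 1 from hγδ)
          rw [← Ordinal.add_one_eq_succ] at this
          exact lt_irrefl _ this
      obtain ⟨β', hβ'β, hle'⟩ := (Ordinal.lt_add_iff hβ.pos.ne').1 hlt
      exact IHβ β' hβ'β l₀ b hbl (famIter_anti F hβ'β.le hb) hc hm hle'
  · -- δ limit
    refine (mem_famIter_limit hδ).2 fun γ hγ => ?_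
    exact IHδ γ hγ β l₀ b hbl hb hc hm (le_trans hγ.le hle)


def DecompP (F : Set (Finset ℕ)) (l₀ : List Blk) (b : Blk) (H : Finset ℕ) : Prop :=
  (∀ E ∈ l₀, E.1 ∈ F) ∧ b.1 ∈ F ∧ (l₀ ++ [b]).Chain' blkR ∧
  (mins (l₀ ++ [b])).toFinset ∈ schreierUnit ∧ H = bU (l₀ ++ [b])

theorem mem_famProd_iff_decompP {F : Set (Finset ℕ)} {H : Finset ℕ} :
    H ∈ famProd schreierUnit F ↔ ∃ l₀ b, DecompP F l₀ b H := by
  rw [mem_famProd_iff]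
  constructor
  · rintro ⟨l, hne, hbl, hc, hm, rfl⟩
    rcases List.eq_nil_or_concat l with rfl | ⟨l₀, b, rfl⟩
    · exact absurd rfl hne
    · rw [List.concat_eq_append] at hbl hc hm ⊢
      exact ⟨l₀, b, fun E hE => hbl E (List.mem_append_left _ hE),
        hbl b (List.mem_append_right _ (List.mem_singleton_self b)), hc, hm, rfl⟩
  · rintro ⟨l₀, b, h1, h2, h3, h4, rfl⟩
    refine ⟨l₀ ++ [b], by simp, ?_, h3, h4, rfl⟩
    intro E hE
    rcases List.mem_append.1 hE with h | h
    · exact h1 E h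
    · rw [List.mem_singleton] at h; subst h; exact h2

theorem not_mem_bU_of_mem_last {l₀ : List Blk} {b : Blk} (hc : (l₀ ++ [b]).Chain' blkR)
    {n : ℕ} (hb : n ∈ b.1) : n ∉ bU l₀ := by
  intro hmem
  rcases mem_bU.1 hmem with ⟨E, hE, hnE⟩
  exact lt_irrefl n ((chain_snoc.1 hc).2 E hE n hnE n hb)

theorem top_mem_last {l₀ : List Blk} {b : Blk} (hc : (l₀ ++ [b]).Chain' blkR) {n : ℕ}
    (hn : ∀ m ∈ bU (l₀ ++ [b]), m ≤ n) (hmem : n ∈ bU (l₀ ++ [b])) : n ∈ b.1 := by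
  rw [bU_snoc, Finset.mem_union] at hmem
  rcases hmem with hmem | hmem
  · rcases mem_bU.1 hmem with ⟨E, hE, hnE⟩
    obtain ⟨k, hk⟩ := b.2
    have h1 : n < k := (chain_snoc.1 hc).2 E hE n hnE k hk
    have h2 : k ≤ n := hn k (by rw [bU_snoc, Finset.mem_union]; exact Or.inr hk)
    omega
  · exact hmem

theorem min'_bU_mem_mins {l : List Blk} (h : l ≠ []) :
    (bU l).min' (bU_nonempty h) ∈ mins l := by
  have hmem := (bU l).min'_mem (bU_nonempty h)
  rcases mem_bU.1 hmem with ⟨Eb, hEb, hx⟩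
  have h1 : Eb.1.min' Eb.2 = (bU l).min' (bU_nonempty h) :=
    le_antisymm (Eb.1.min'_le _ hx)
      ((bU l).min'_le _ (mem_bU.2 ⟨Eb, hEb, Eb.1.min'_mem Eb.2⟩))
  exact List.mem_map.2 ⟨Eb, hEb, h1⟩

/-- erase the top element of a decomposable set: case where the last block is a singleton -/
theorem erase_top_singleton {l₀ : List Blk} {b : Blk} (hc : (l₀ ++ [b]).Chain' blkR)
    {n : ℕ} (hb : b.1 = {n}) : (bU (l₀ ++ [b])).erase n = bU l₀ := by
  have hnmem : n ∉ bU l₀ := not_mem_bU_of_mem_last hc (by rw [hb]; exact Finset.mem_singleton_self n)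
  ext x
  rw [Finset.mem_erase, bU_snoc, Finset.mem_union, hb, Finset.mem_singleton]
  constructor
  · rintro ⟨hx, hmem | hmem⟩
    · exact hmem
    · exact absurd hmem hx
  · intro hx
    exact ⟨fun h => hnmem (h ▸ hx), Or.inl hx⟩

theorem erase_top_big {l₀ : List Blk} {b : Blk} (hc : (l₀ ++ [b]).Chain' blkR) {n : ℕ}
    (hnb : n ∈ b.1) (hBne : (b.1.erase n).Nonempty) :
    (bU (l₀ ++ [b])).erase n = bU (l₀ ++ [⟨b.1.erase n, hBne⟩]) := by
  have hnmem : n ∉ bU l₀ := not_mem_bU_of_mem_last hc hnb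
  ext x
  rw [Finset.mem_erase, bU_snoc, bU_snoc, Finset.mem_union, Finset.mem_union, Finset.mem_erase]
  constructor
  · rintro ⟨hx, hmem | hmem⟩
    · exact Or.inl hmem
    · exact Or.inr ⟨hx, hmem⟩
  · rintro (hmem | ⟨hx, hmem⟩)
    · exact ⟨fun h => hnmem (h ▸ hmem), Or.inl hmem⟩
    · exact ⟨hx, Or.inr hmem⟩

theorem famProd_eraseMax {F : Set (Finset ℕ)}
    (hF : ∀ E ∈ F, ∀ n : ℕ, (∀ m ∈ E, m ≤ n) → (E.erase n).Nonempty → E.erase n ∈ F) :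
    ∀ H ∈ famProd schreierUnit F, ∀ n : ℕ, (∀ m ∈ H, m ≤ n) → (H.erase n).Nonempty →
      H.erase n ∈ famProd schreierUnit F := by
  intro H hH n hn hne
  by_cases hnH : n ∈ H
  swap
  · rwa [Finset.erase_eq_of_notMem hnH]
  obtain ⟨l₀, b, hbl, hbF, hc, hm, rfl⟩ := mem_famProd_iff_decompP.1 hH
  have hnb : n ∈ b.1 := top_mem_last hc hn hnH
  by_cases hsing : b.1 = {n}
  · -- drop the last block
    rw [erase_top_singleton hc hsing] at hne ⊢
    rcases List.eq_nil_or_concat l₀ with rfl | ⟨l₁, b', rfl⟩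
    · exact absurd hne (by simp [bU])
    rw [List.concat_eq_append] at hbl hc hm ⊢
    refine mem_famProd_iff_decompP.2 ⟨l₁, b', fun E hE => hbl E (List.mem_append_left _ hE),
      hbl b' (List.mem_append_right _ (List.mem_singleton_self b')), ?_, ?_, rfl⟩
    · exact (List.isChain_append.1 hc).1
    · refine schreierUnit_hered ?_ hm
      intro k hk
      rw [List.mem_toFinset] at hk ⊢
      rw [mins_snoc]
      exact List.mem_append_left _ hk
  · -- erase within the last block
    have hBne : (b.1.erase n).Nonempty := by
      have hcard : 1 < b.1.card := by
        rcases lt_or_ge 1 b.1.card with h | h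
        · exact h
        · exfalso
          have hcard1 : b.1.card = 1 := le_antisymm h (Finset.one_le_card.2 b.2)
          rcases Finset.card_eq_one.1 hcard1 with ⟨a, ha⟩
          apply hsing
          rw [ha] at hnb ⊢
          rw [Finset.mem_singleton] at hnb
          rw [hnb]
      rcases Finset.exists_mem_ne hcard n with ⟨x, hx, hxn⟩
      exact ⟨x, Finset.mem_erase.2 ⟨hxn, hx⟩⟩
    have hble : ∀ m ∈ b.1, m ≤ n := fun m hm => hn m (by rw [bU_snoc, Finset.mem_union]; exact Or.inr hm)
    have hBF : b.1.erase n ∈ F := hF b.1 hbF n hble hBne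
    rw [erase_top_big hc hnb hBne] at hne ⊢
    refine mem_famProd_iff_decompP.2 ⟨l₀, ⟨b.1.erase n, hBne⟩, hbl, hBF, ?_, ?_, rfl⟩
    · refine chain_snoc.2 ⟨(chain_snoc.1 hc).1, fun E hE m hmE k hk => ?_⟩
      exact (chain_snoc.1 hc).2 E hE m hmE k (b.1.erase_subset n hk)
    · have hmineq : (b.1.erase n).min' hBne = b.1.min' b.2 := min'_erase_max hble hBne
      rw [mins_snoc]
      rw [mins_snoc] at hm
      simpa [hmineq] using hm


noncomputable def prodTerm (ξ : Ordinal) (μ : Finset ℕ → Ordinal) (p : List Blk × Blk) : Ordinal :=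
  ω ^ ξ * ((bU (p.1 ++ [p.2])).min' (bU_nonempty (by simp)) - (p.1.length + 1) : ℕ) + μ p.2.1 + 1

noncomputable def prodMu (F : Set (Finset ℕ)) (ξ : Ordinal) (μ : Finset ℕ → Ordinal)
    (H : Finset ℕ) : Ordinal :=
  sSup (prodTerm ξ μ '' {p : List Blk × Blk | DecompP F p.1 p.2 H})

theorem prodTerm_eq (ξ : Ordinal) (μ : Finset ℕ → Ordinal) (l₀ : List Blk) (b : Blk)
    {H : Finset ℕ} (hne : H.Nonempty) (hH : H = bU (l₀ ++ [b])) :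
    prodTerm ξ μ (l₀, b) =
      ω ^ ξ * ((H.min' hne - (l₀.length + 1) : ℕ)) + μ b.1 + 1 := by
  simp only [prodTerm]
  rw [min'_congr (bU_nonempty (by simp)) hne hH.symm]

theorem prodTerm_le {F : Set (Finset ℕ)} {ξ : Ordinal} {μ : Finset ℕ → Ordinal}
    (hbd : ∀ E, μ E < ω ^ ξ) {H : Finset ℕ} (hne : H.Nonempty) {p : List Blk × Blk}
    (hp : DecompP F p.1 p.2 H) :
    prodTerm ξ μ p ≤ ω ^ ξ * ((H.min' hne : Ordinal) + 1) := by
  obtain ⟨l₀, b⟩ := p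
  rw [prodTerm_eq ξ μ l₀ b hne hp.2.2.2.2]
  rw [mul_add, mul_one, add_assoc]
  refine add_le_add ?_ ?_
  · refine mul_le_mul_right ?_ _
    exact_mod_cast Nat.sub_le _ _
  · rw [Ordinal.add_one_eq_succ, Order.succ_le_iff]
    exact hbd b.1

theorem prodMu_bddAbove {F : Set (Finset ℕ)} {ξ : Ordinal} {μ : Finset ℕ → Ordinal}
    (hbd : ∀ E, μ E < ω ^ ξ) {H : Finset ℕ} (hne : H.Nonempty) :
    BddAbove (prodTerm ξ μ '' {p : List Blk × Blk | DecompP F p.1 p.2 H}) := by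
  refine ⟨ω ^ ξ * ((H.min' hne : Ordinal) + 1), ?_⟩
  rintro x ⟨p, hp, rfl⟩
  exact prodTerm_le hbd hne hp

theorem prodMu_lt {F : Set (Finset ℕ)} {ξ : Ordinal} {μ : Finset ℕ → Ordinal}
    (hbd : ∀ E, μ E < ω ^ ξ) (H : Finset ℕ) : prodMu F ξ μ H < ω ^ (ξ + 1) := by
  have hpos : (0 : Ordinal) < ω ^ (ξ + 1) :=
    Ordinal.opow_pos _ Ordinal.omega0_pos
  rcases Set.eq_empty_or_nonempty {p : List Blk × Blk | DecompP F p.1 p.2 H} with hS | ⟨p, hp⟩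
  · rw [prodMu, hS, Set.image_empty, csSup_empty]
    exact hpos
  · have hne : H.Nonempty := by
      rw [hp.2.2.2.2]
      exact bU_nonempty (by simp)
    have h1 : prodMu F ξ μ H ≤ ω ^ ξ * ((H.min' hne : Ordinal) + 1) := by
      refine csSup_le' ?_
      rintro x ⟨q, hq, rfl⟩
      exact prodTerm_le hbd hne hq
    refine lt_of_le_of_lt h1 ?_
    have : ((H.min' hne : Ordinal) + 1) < ω := by
      rw [show ((H.min' hne : Ordinal) + 1) = ((H.min' hne + 1 : ℕ) : Ordinal) by push_cast; rfl]
      exact Ordinal.nat_lt_omega0 _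
    calc ω ^ ξ * ((H.min' hne : Ordinal) + 1) < ω ^ ξ * ω :=
          mul_lt_mul_of_pos_left this (Ordinal.opow_pos _ Ordinal.omega0_pos)
      _ = ω ^ (ξ + 1) := by rw [Ordinal.opow_add, Ordinal.opow_one]

theorem erase_nonempty_of_ne_singleton {b : Finset ℕ} (hne : b.Nonempty) {n : ℕ}
    (hnb : n ∈ b) (hsing : b ≠ {n}) : (b.erase n).Nonempty := by
  have hcard : 1 < b.card := by
    rcases lt_or_ge 1 b.card with h | h
    · exact h
    · exfalso
      have hcard1 : b.card = 1 := le_antisymm h (Finset.one_le_card.2 hne)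
      rcases Finset.card_eq_one.1 hcard1 with ⟨a, ha⟩
      apply hsing
      rw [ha] at hnb ⊢
      rw [Finset.mem_singleton] at hnb
      rw [hnb]
  rcases Finset.exists_mem_ne hcard n with ⟨x, hx, hxn⟩
  exact ⟨x, Finset.mem_erase.2 ⟨hxn, hx⟩⟩

theorem prodMu_dec {F : Set (Finset ℕ)} {ξ : Ordinal} {μ : Finset ℕ → Ordinal}
    (hbd : ∀ E, μ E < ω ^ ξ)
    (hdec : ∀ E : Finset ℕ, E.Nonempty → ∀ n, (∀ m ∈ E, m < n) → insert n E ∈ F →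
      μ (insert n E) < μ E)
    (hEM : ∀ E ∈ F, ∀ n : ℕ, (∀ m ∈ E, m ≤ n) → (E.erase n).Nonempty → E.erase n ∈ F) :
    ∀ E : Finset ℕ, E.Nonempty → ∀ n, (∀ m ∈ E, m < n) → insert n E ∈ famProd schreierUnit F →
      prodMu F ξ μ (insert n E) < prodMu F ξ μ E := by
  intro E hEne n hn hins
  have hnE : n ∉ E := fun h => lt_irrefl n (hn n h)
  have hH'ne : (insert n E).Nonempty := Finset.insert_nonempty n E
  have hminH' : (insert n E).min' hH'ne = E.min' hEne := min'_insert_of_lt hEne hn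
  -- the term set of `insert n E` is finite and nonempty, so its sup is attained
  have hfin : (prodTerm ξ μ '' {p : List Blk × Blk | DecompP F p.1 p.2 (insert n E)}).Finite := by
    have hpows : {B : Finset ℕ | B ⊆ insert n E}.Finite :=
      Set.Finite.ofFinset (insert n E).powerset (fun B => by simp [Finset.mem_powerset])
    refine Set.Finite.subset (Set.Finite.image
      (fun q : ℕ × Finset ℕ => ω ^ ξ * (q.1 : Ordinal) + μ q.2 + 1)
      (Set.Finite.prod (Set.finite_Iic ((insert n E).min' hH'ne)) hpows)) ?_
    rintro x ⟨p, hp, rfl⟩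
    obtain ⟨l₀, b⟩ := p
    refine ⟨((insert n E).min' hH'ne - (l₀.length + 1), b.1), ⟨?_, ?_⟩, ?_⟩
    · exact Nat.sub_le _ _
    · intro x hx
      rw [hp.2.2.2.2, bU_snoc]
      exact Finset.mem_union_right _ hx
    · rw [prodTerm_eq ξ μ l₀ b hH'ne hp.2.2.2.2]
  have hnonempty :
      (prodTerm ξ μ '' {p : List Blk × Blk | DecompP F p.1 p.2 (insert n E)}).Nonempty := by
    obtain ⟨l₀, b, hp⟩ := mem_famProd_iff_decompP.1 hins
    exact ⟨prodTerm ξ μ (l₀, b), ⟨(l₀, b), hp, rfl⟩⟩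
  obtain ⟨q, hq, hqs⟩ := Set.Nonempty.csSup_mem hnonempty hfin
  obtain ⟨l₀, b⟩ := q
  -- surgery
  have hc := hq.2.2.1
  have hn' : ∀ m ∈ bU (l₀ ++ [b]), m ≤ n := by
    rw [← hq.2.2.2.2]
    intro m hm
    rcases Finset.mem_insert.1 hm with rfl | hm
    · exact le_refl m
    · exact (hn m hm).le
  have hnb : n ∈ b.1 := top_mem_last hc hn' (by rw [← hq.2.2.2.2]; exact Finset.mem_insert_self n E)
  have hEerase : (insert n E).erase n = E := Finset.erase_insert hnE
  have hslem : l₀.length + 1 ≤ (insert n E).min' hH'ne := by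
    have h1 := length_le_of_minscond hc hq.2.2.2.1
      (k := (bU (l₀ ++ [b])).min' (bU_nonempty (by simp))) (min'_bU_mem_mins (by simp))
    rw [List.length_append, List.length_singleton] at h1
    have h2 : (bU (l₀ ++ [b])).min' (bU_nonempty (by simp)) = (insert n E).min' hH'ne :=
      min'_congr _ _ hq.2.2.2.2.symm
    rwa [h2] at h1
  rw [prodMu, ← hqs]
  by_cases hsing : b.1 = {n}
  · -- last block is {n} : drop it
    have hEeq : E = bU l₀ := by
      rw [← hEerase, hq.2.2.2.2, erase_top_singleton hc hsing]
    have hl₀ne : l₀ ≠ [] := by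
      rintro rfl
      rw [show bU ([] : List Blk) = ∅ from rfl] at hEeq
      rw [hEeq] at hEne
      exact absurd rfl hEne.ne_empty
    rcases List.eq_nil_or_concat l₀ with rfl | ⟨l₁, b', rfl⟩
    · exact absurd rfl hl₀ne
    rw [List.concat_eq_append] at hEeq hq hslem hc ⊢
    have hq' : DecompP F l₁ b' E := by
      refine ⟨fun X hX => hq.1 X (List.mem_append_left _ hX),
        hq.1 b' (List.mem_append_right _ (List.mem_singleton_self b')),
        (List.isChain_append.1 hq.2.2.1).1, ?_, hEeq⟩
      refine schreierUnit_hered ?_ hq.2.2.2.1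
      intro k hk
      rw [List.mem_toFinset] at hk ⊢
      rw [mins_snoc]
      exact List.mem_append_left _ hk
    have hlt : prodTerm ξ μ (l₁ ++ [b'], b) < prodTerm ξ μ (l₁, b') := by
      rw [prodTerm_eq ξ μ (l₁ ++ [b']) b hH'ne hq.2.2.2.2,
        prodTerm_eq ξ μ l₁ b' hEne hEeq]
      rw [List.length_append, List.length_singleton] at hslem ⊢
      rw [hminH'] at hslem ⊢
      have hnat : (E.min' hEne - (l₁.length + 1 + 1) : ℕ) + 1 = E.min' hEne - (l₁.length + 1) := by
        omega
      calc ω ^ ξ * ((E.min' hEne - (l₁.length + 1 + 1) : ℕ) : Ordinal) + μ b.1 + 1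
          ≤ ω ^ ξ * ((E.min' hEne - (l₁.length + 1 + 1) : ℕ) : Ordinal) + ω ^ ξ := by
            rw [add_assoc]
            refine add_le_add_right ?_ _
            rw [Ordinal.add_one_eq_succ, Order.succ_le_iff]
            exact hbd b.1
        _ = ω ^ ξ * ((E.min' hEne - (l₁.length + 1) : ℕ) : Ordinal) := by
            rw [← hnat]
            push_cast
            rw [mul_add, mul_one]
        _ < ω ^ ξ * ((E.min' hEne - (l₁.length + 1) : ℕ) : Ordinal) + (μ b'.1 + 1) := by
            conv_lhs => rw [← add_zero (ω ^ ξ * ((E.min' hEne - (l₁.length + 1) : ℕ) : Ordinal))]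
            refine add_lt_add_right ?_ _
            exact lt_of_le_of_lt zero_le
              (by rw [Ordinal.add_one_eq_succ]; exact Order.lt_succ _)
        _ = ω ^ ξ * ((E.min' hEne - (l₁.length + 1) : ℕ) : Ordinal) + μ b'.1 + 1 := by
            rw [add_assoc]
    refine lt_of_lt_of_le hlt ?_
    exact le_csSup (prodMu_bddAbove hbd hEne) ⟨(l₁, b'), hq', rfl⟩
  · -- erase within the last block
    have hBne : (b.1.erase n).Nonempty := erase_nonempty_of_ne_singleton b.2 hnb hsing
    have hble : ∀ m ∈ b.1, m ≤ n := fun m hm =>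
      hn' m (by rw [bU_snoc, Finset.mem_union]; exact Or.inr hm)
    have hBF : b.1.erase n ∈ F := hEM b.1 hq.2.1 n hble hBne
    have hEeq : E = bU (l₀ ++ [⟨b.1.erase n, hBne⟩]) := by
      rw [← hEerase, hq.2.2.2.2, erase_top_big hc hnb hBne]
    have hq' : DecompP F l₀ ⟨b.1.erase n, hBne⟩ E := by
      refine ⟨hq.1, hBF, ?_, ?_, hEeq⟩
      · refine chain_snoc.2 ⟨(chain_snoc.1 hc).1, fun X hX m hmX k hk => ?_⟩
        exact (chain_snoc.1 hc).2 X hX m hmX k (b.1.erase_subset n hk)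
      · have hmineq : (b.1.erase n).min' hBne = b.1.min' b.2 := min'_erase_max hble hBne
        have hmold := hq.2.2.2.1
        rw [mins_snoc] at hmold
        rw [mins_snoc]
        simpa [hmineq] using hmold
    have hBlt : μ b.1 < μ (b.1.erase n) := by
      have hmlt : ∀ m ∈ b.1.erase n, m < n := fun m hm =>
        lt_of_le_of_ne (hble m (b.1.erase_subset n hm)) (Finset.mem_erase.1 hm).1
      have hinsB : insert n (b.1.erase n) = b.1 := Finset.insert_erase hnb
      have := hdec (b.1.erase n) hBne n hmlt (by rw [hinsB]; exact hq.2.1)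
      rwa [hinsB] at this
    have hlt : prodTerm ξ μ (l₀, b) < prodTerm ξ μ (l₀, ⟨b.1.erase n, hBne⟩) := by
      rw [prodTerm_eq ξ μ l₀ b hH'ne hq.2.2.2.2, prodTerm_eq ξ μ l₀ _ hEne hEeq]
      rw [hminH']
      rw [Ordinal.add_one_eq_succ, Ordinal.add_one_eq_succ]
      exact Order.succ_lt_succ (add_lt_add_right hBlt _)
    refine lt_of_lt_of_le hlt ?_
    exact le_csSup (prodMu_bddAbove hbd hEne) ⟨(l₀, ⟨b.1.erase n, hBne⟩), hq', rfl⟩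


theorem mins_single_cond {n : ℕ} (hn : 1 ≤ n) :
    (mins [(⟨{n}, Finset.singleton_nonempty n⟩ : Blk)]).toFinset ∈ schreierUnit := by
  have h1 : (mins [(⟨{n}, Finset.singleton_nonempty n⟩ : Blk)]) = [n] := by
    simp [mins]
  rw [h1]
  intro k hk
  simp only [List.toFinset_cons, List.toFinset_nil] at hk ⊢
  rw [Finset.mem_insert] at hk
  rcases hk with rfl | hk
  · simpa using hn
  · simp at hk

theorem schreier_key {ξ : Ordinal} {F : Set (Finset ℕ)} (hF : IsSchreier ξ F) :
    (∀ n : ℕ, 1 ≤ n → ({n} : Finset ℕ) ∈ F) ∧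
    (∀ E ∈ F, ∀ n : ℕ, (∀ m ∈ E, m ≤ n) → (E.erase n).Nonempty → E.erase n ∈ F) ∧
    (∀ γ < ω ^ ξ, ∀ N : ℕ, ∃ n, N ≤ n ∧ ({n} : Finset ℕ) ∈ famIter F γ) ∧
    (∃ μ : Finset ℕ → Ordinal, (∀ E, μ E < ω ^ ξ) ∧
      ∀ E : Finset ℕ, E.Nonempty → ∀ n, (∀ m ∈ E, m < n) → insert n E ∈ F →
        μ (insert n E) < μ E) := by
  induction hF with
  | zero =>
    refine ⟨fun n _ => by simp, fun E hE n hn hne => ?_, fun γ hγ N => ?_, ⟨fun _ => 0, ?_, ?_⟩⟩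
    · exact le_trans (Finset.card_le_card (E.erase_subset n)) hE
    · rw [Ordinal.opow_zero, Ordinal.lt_one_iff_zero] at hγ
      subst hγ
      rw [famIter_zero]
      exact ⟨N, le_refl N, by simp⟩
    · intro E
      rw [Ordinal.opow_zero]
      exact zero_lt_one
    · intro E hEne n hn hins
      exfalso
      have hnE : n ∉ E := fun h => lt_irrefl n (hn n h)
      have hc : (insert n E).card ≤ 1 := hins
      rw [Finset.card_insert_of_notMem hnE] at hc
      have h1 := Finset.one_le_card.2 hEne
      omega
  | succ ξ F hF IH =>
    obtain ⟨hsing, hEM, hLow, μ, hbd, hdec⟩ := IH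
    have singmem : ∀ n : ℕ, 1 ≤ n → ({n} : Finset ℕ) ∈ famProd schreierUnit F := by
      intro n hn
      refine mem_famProd_iff_decompP.2 ⟨[], ⟨{n}, Finset.singleton_nonempty n⟩, by simp, hsing n hn, ?_, ?_, ?_⟩
      · simp [List.Chain']
      · rw [List.nil_append]
        exact mins_single_cond hn
      · rw [List.nil_append, bU_singleton]
    refine ⟨singmem, famProd_eraseMax hEM, fun γ hγ N => ?_, ⟨prodMu F ξ μ, prodMu_lt hbd, prodMu_dec hbd hdec hEM⟩⟩
    -- Low
    rw [Ordinal.opow_add, Ordinal.opow_one] at hγ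
    have hq : γ / ω ^ ξ < ω :=
      (Ordinal.div_lt (Ordinal.opow_ne_zero ξ Ordinal.omega0_ne_zero)).2 hγ
    obtain ⟨k, hk⟩ := Ordinal.lt_omega0.1 hq
    have hγk : γ < ω ^ ξ * (k + 1 : ℕ) := by
      have h1 := Ordinal.div_add_mod γ (ω ^ ξ)
      have h2 : γ % ω ^ ξ < ω ^ ξ :=
        Ordinal.mod_lt γ (Ordinal.opow_ne_zero ξ Ordinal.omega0_ne_zero)
      calc γ = ω ^ ξ * (γ / ω ^ ξ) + γ % ω ^ ξ := h1.symm
        _ < ω ^ ξ * (γ / ω ^ ξ) + ω ^ ξ := add_lt_add_right h2 _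
        _ = ω ^ ξ * ((k : ℕ) : Ordinal) + ω ^ ξ := by rw [hk]
        _ = ω ^ ξ * ((k + 1 : ℕ) : Ordinal) := by push_cast; rw [mul_add, mul_one]
    set n := max N (k + 2) with hn
    set b : Blk := ⟨{n}, Finset.singleton_nonempty n⟩ with hb
    have hminb : (bU ([] ++ [b])).min' (bU_nonempty (by simp)) = n := by
      rw [min'_congr _ (Finset.singleton_nonempty n) (by rw [List.nil_append, bU_singleton])]
      exact Finset.min'_singleton n
    have hres := prodLow hLow γ 0 [] b (by simp) (by
        rw [famIter_zero]
        exact hsing n (le_trans (by omega) (le_max_right N (k + 2)))) (by simp [List.Chain']) ?_ ?_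
    · refine ⟨n, le_max_left N (k + 2), ?_⟩
      rwa [List.nil_append, bU_singleton] at hres
    · rw [List.nil_append]
      exact mins_single_cond (by omega)
    · rw [hminb, add_zero]
      refine le_of_lt (lt_of_lt_of_le hγk ?_)
      refine mul_le_mul_right ?_ _
      have : (k + 1 : ℕ) ≤ n - 1 := by
        have := le_max_right N (k + 2)
        omega
      exact_mod_cast this
  | limit ξ hξ o Fs ho holt hcof hS hstep IH =>
    have hmono : Monotone Fs := monotone_nat_of_le_succ hstep
    have hFlim : {E : Finset ℕ | ∃ n : ℕ, (∀ m ∈ E, n ≤ m) ∧ E ∈ Fs n} = Flim Fs := rfl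
    rw [hFlim]
    refine ⟨fun n hn => ?_, fun E hE n hn hne => ?_, fun γ hγ N => ?_, ?_⟩
    · refine ⟨n, fun m hm => ?_, (IH n).1 n hn⟩
      rw [Finset.mem_singleton] at hm
      exact hm.ge
    · have hEne : E.Nonempty := hne.mono (E.erase_subset n)
      have hE' : E ∈ Fs (E.min' hEne) := (mem_Flim_iff hmono hEne).1 hE
      have her : E.erase n ∈ Fs (E.min' hEne) := (IH (E.min' hEne)).2.1 E hE' n hn hne
      refine (mem_Flim_iff hmono hne).2 ?_
      rw [min'_erase_max hn hne]
      exact her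
    · -- Low at limit
      have hlog : Ordinal.log ω γ + 1 < ξ := by
        rcases eq_or_ne γ 0 with rfl | hγ0
        · rw [Ordinal.log_zero_right]
          rw [zero_add]
          exact Ordinal.one_lt_of_isSuccLimit hξ
        · have := (Ordinal.lt_opow_iff_log_lt Ordinal.one_lt_omega0 hγ0).1 hγ
          rw [Ordinal.add_one_eq_succ]
          exact hξ.succ_lt this
      obtain ⟨j, hj⟩ := hcof _ hlog
      have hγ' : γ < ω ^ (o j + 1) := by
        have h1 : γ < ω ^ (Ordinal.log ω γ + 1) := by
          rw [Ordinal.add_one_eq_succ]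
          exact Ordinal.lt_opow_succ_log_self Ordinal.one_lt_omega0 γ
        exact lt_of_lt_of_le h1 (Ordinal.opow_le_opow_right Ordinal.omega0_pos
          (le_trans hj le_self_add))
      obtain ⟨n, hnN, hmem⟩ := (IH j).2.2.1 γ hγ' (max N j)
      refine ⟨n, le_trans (le_max_left N j) hnN, ?_⟩
      refine iter_Flim_of_mem hmono (Finset.singleton_nonempty n) ?_ hmem
      rw [Finset.min'_singleton]
      exact le_trans (le_max_right N j) hnN
    · -- Upp at limit
      classical
      choose μs hbds hdecs using fun k => (IH k).2.2.2
      refine ⟨fun E => if h : E.Nonempty then μs (E.min' h) E else 0, fun E => ?_, ?_⟩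
      · show (if h : E.Nonempty then μs (E.min' h) E else 0) < ω ^ ξ
        by_cases h : E.Nonempty
        · rw [dif_pos h]
          refine lt_trans (hbds (E.min' h) E) ?_
          rw [Ordinal.opow_lt_opow_iff_right Ordinal.one_lt_omega0]
          rw [Ordinal.add_one_eq_succ]
          exact hξ.succ_lt (holt _)
        · rw [dif_neg h]
          exact Ordinal.opow_pos _ Ordinal.omega0_pos
      · intro E hEne n hn hins
        have hH'ne : (insert n E).Nonempty := Finset.insert_nonempty n E
        have e1 : (insert n E).min' hH'ne = E.min' hEne := min'_insert_of_lt hEne hn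
        have hins' : insert n E ∈ Fs (E.min' hEne) := by
          have := (mem_Flim_iff hmono hH'ne).1 hins
          rwa [e1] at this
        have := hdecs (E.min' hEne) E hEne n hn hins'
        show (if h : (insert n E).Nonempty then μs ((insert n E).min' h) (insert n E) else 0) <
          (if h : E.Nonempty then μs (E.min' h) E else 0)
        rw [dif_pos hH'ne, dif_pos hEne, e1]
        exact this


/-- For every countable ordinal `ξ`, any Schreier family of order `ξ` has
Cantor–Bendixson-type index `ι(𝒮_ξ) = ω^ξ`. -/
theorem famIota_schreier (ξ : Ordinal) (hξ : ξ.card ≤ Cardinal.aleph0)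
    (F : Set (Finset ℕ)) (hF : IsSchreier ξ F) :
    famIota F = Ordinal.omega0 ^ ξ := by
  obtain ⟨hsing, hEM, hLow, μ, hbd, hdec⟩ := schreier_key hF
  have hupper : famIter F (ω ^ ξ) ⊆ {(∅ : Finset ℕ)} := by
    intro E hE
    rw [Set.mem_singleton_iff]
    by_contra hne'
    have hne : E.Nonempty := Finset.nonempty_iff_ne_empty.2 hne'
    have h1 := iter_le_mu μ hdec (ω ^ ξ) E hE hne
    exact absurd (lt_of_le_of_lt h1 (hbd E)) (lt_irrefl _)
  have hset : {α : Ordinal | famIter F α ⊆ {(∅ : Finset ℕ)}} = Set.Ici (ω ^ ξ) := by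
    ext α
    simp only [Set.mem_setOf_eq, Set.mem_Ici]
    constructor
    · intro hα
      by_contra hcon
      push_neg at hcon
      obtain ⟨n, _, hmem⟩ := hLow α hcon 1
      have := hα hmem
      rw [Set.mem_singleton_iff] at this
      exact absurd this (Finset.singleton_ne_empty n)
    · intro hα
      exact fun E hE => hupper (famIter_anti F hα hE)
  rw [famIota, hset, csInf_Ici]
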